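/- Let f : [0,∞) → ℝ be a continuous bounded function. If the function g(t) := exp(∫₀ᵗ f(s) ds) is integrable on [0,∞), then ∫₀ᵗ f(s) ds → -∞ as t → ∞. -/

import Mathlib

open MeasureTheory Filter Topology

theorem surface_gravity_integral_diverges
    (f : ℝ → ℝ) (K : ℝ) (hK : 0 < K)
    (hcont : ContinuousOn f (Set.Ici 0))
    (hbd : ∀ t ≥ (0:ℝ), |f t| ≤ K)
    (hint : IntegrableOn (fun t => Real.exp (∫ s in (0:ℝ)..t, f s)) (Set.Ici 0)) :
    Tendsto (fun t => ∫ s in (0:ℝ)..t, f s) atTop atBot := by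
  set F : ℝ → ℝ := fun t => ∫ s in (0:ℝ)..t, f s with hF
  set g : ℝ → ℝ := fun t => Real.exp (F t) with hg
  by_contra hcon
  rw [tendsto_atBot] at hcon
  push_neg at hcon
  obtain ⟨b, hb⟩ := hcon
  replace hb : ∃ᶠ x in atTop, ¬ (F x ≤ b) := hb.mono fun x hx => not_le.mpr hx
  -- f is interval integrable on nonneg intervals
  have hfint : ∀ a c : ℝ, 0 ≤ a → a ≤ c → IntervalIntegrable f volume a c := by
    intro a c ha hac
    apply ContinuousOn.intervalIntegrable
    apply hcont.mono
    rw [Set.uIcc_of_le hac]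
    intro x hx
    exact le_trans ha hx.1
  -- Lipschitz-type bound
  have hlip : ∀ t s : ℝ, 0 ≤ t → t ≤ s → s ≤ t + 1 → F t - K ≤ F s := by
    intro t s ht hts hs1
    have h1 : F s - F t = ∫ u in t..s, f u := by
      rw [sub_eq_iff_eq_add']
      exact (intervalIntegral.integral_add_adjacent_intervals (hfint 0 t le_rfl ht)
        (hfint t s ht hts)).symm
    have h2 : |∫ u in t..s, f u| ≤ K * (s - t) := by
      calc |∫ u in t..s, f u| ≤ ∫ u in t..s, |f u| :=
            intervalIntegral.abs_integral_le_integral_abs hts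
        _ ≤ ∫ u in t..s, K := by
            apply intervalIntegral.integral_mono_on hts ((hfint t s ht hts).abs)
              intervalIntegrable_const
            intro x hx
            exact hbd x (le_trans ht hx.1)
        _ = K * (s - t) := by simp [mul_comm]
    have h3 : K * (s - t) ≤ K := by
      have : s - t ≤ 1 := by linarith
      nlinarith
    have := (abs_le.mp (h2.trans h3)).1
    linarith
  -- g interval integrable on nonneg intervals
  have hgint : ∀ a c : ℝ, 0 ≤ a → a ≤ c → IntervalIntegrable g volume a c := by
    intro a c ha hac
    rw [intervalIntegrable_iff_integrableOn_Ioc_of_le hac]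
    apply hint.mono_set
    intro x hx
    exact le_of_lt (lt_of_le_of_lt ha hx.1)
  -- the tail piece tends to 0
  have htend : Tendsto (fun t => ∫ s in (0:ℝ)..t, g s) atTop (𝓝 (∫ s in Set.Ioi 0, g s)) := by
    apply intervalIntegral_tendsto_integral_Ioi 0 (hint.mono_set Set.Ioi_subset_Ici_self)
      tendsto_id
  have hdiff : Tendsto (fun t => (∫ s in (0:ℝ)..(t+1), g s) - ∫ s in (0:ℝ)..t, g s)
      atTop (𝓝 0) := by
    have := (htend.comp (tendsto_atTop_add_const_right atTop 1 tendsto_id)).sub htend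
    simpa using this
  -- frequently, the piece is bounded below
  have hfreq : ∃ᶠ t in atTop, Real.exp (b - K) ≤
      (∫ s in (0:ℝ)..(t+1), g s) - ∫ s in (0:ℝ)..t, g s := by
    apply (hb.and_eventually (eventually_ge_atTop (0:ℝ))).mono
    rintro t ⟨hbt, ht0⟩
    have hsplit : (∫ s in (0:ℝ)..(t+1), g s) - ∫ s in (0:ℝ)..t, g s
        = ∫ s in t..(t+1), g s := by
      rw [sub_eq_iff_eq_add']
      exact (intervalIntegral.integral_add_adjacent_intervals (hgint 0 t le_rfl ht0)
        (hgint t (t+1) ht0 (by linarith))).symm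
    rw [hsplit]
    calc Real.exp (b - K) = ∫ s in t..(t+1), Real.exp (b - K) := by simp
      _ ≤ ∫ s in t..(t+1), g s := by
          apply intervalIntegral.integral_mono_on (by linarith) intervalIntegrable_const
            (hgint t (t+1) ht0 (by linarith))
          intro x hx
          apply Real.exp_le_exp.mpr
          have := hlip t x ht0 hx.1 hx.2
          linarith [lt_of_not_ge hbt]
  -- contradiction
  have hev : ∀ᶠ t in atTop,
      (∫ s in (0:ℝ)..(t+1), g s) - (∫ s in (0:ℝ)..t, g s) < Real.exp (b - K) := by
    have := hdiff.eventually (eventually_lt_nhds (Real.exp_pos (b - K)) : ∀ᶠ x in 𝓝 (0:ℝ), x < Real.exp (b - K))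
    exact this
  obtain ⟨t, h1, h2⟩ := (hfreq.and_eventually hev).exists
  linarith
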